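/- Define E_r(x₁,…,xₙ; y_r,…,yₙ) = ∑_{J ⊆ {1,…,n}, |J| ≤ r} (-1)^{r-|J|} (∏_{j∈J} x_j) · ∑_{r ≤ l₁ ≤ ⋯ ≤ l_{r-|J|} ≤ n} y_{l₁}⋯y_{l_{r-|J|}} (the inner sum equal to 1 when |J| = r). Then for real variables, lim_{α→0} α^{-2r} E_r(e^{αx₁}+e^{-αx₁},…,e^{αxₙ}+e^{-αxₙ}; e^{αy_r}+e^{-αy_r},…,e^{αyₙ}+e^{-αyₙ}) = E_r(x₁²,…,xₙ²; y_r²,…,yₙ²). -/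

import Mathlib

open scoped Classical

/-- Complete homogeneous-type inner sum:
`∑_{r ≤ l₁ ≤ ⋯ ≤ l_p ≤ n} y_{l₁} ⋯ y_{l_p}` realized as a sum over monotone
tuples `f : Fin p → Fin n` whose values (1-based) are ≥ r.  It equals 1 when `p = 0`. -/
noncomputable def innerSum (n r p : ℕ) (y : Fin n → ℝ) : ℝ :=
  ∑ f ∈ Finset.univ.filter
      (fun f : Fin p → Fin n => Monotone f ∧ ∀ i, r ≤ (f i : ℕ) + 1),
    ∏ i, y (f i)

/-- The symmetric function
`E_r(x₁,…,xₙ; y_r,…,yₙ) = ∑_{J ⊆ {1,…,n}, |J| ≤ r} (-1)^{r-|J|} (∏_{j∈J} x_j)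
  ∑_{r ≤ l₁ ≤ ⋯ ≤ l_{r-|J|} ≤ n} y_{l₁}⋯y_{l_{r-|J|}}`. -/
noncomputable def Er (n r : ℕ) (x y : Fin n → ℝ) : ℝ :=
  ∑ J ∈ Finset.univ.filter (fun J : Finset (Fin n) => J.card ≤ r),
    (-1 : ℝ) ^ (r - J.card) * (∏ j ∈ J, x j) * innerSum n r (r - J.card) y

section ErAux
open Finset

noncomputable def Mon (n r p : ℕ) : Finset (Fin p → Fin n) :=
  Finset.univ.filter (fun f => Monotone f ∧ ∀ i, r ≤ (f i : ℕ) + 1)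

lemma innerSum_eq (n r p : ℕ) (y : Fin n → ℝ) :
    innerSum n r p y = ∑ f ∈ Mon n r p, ∏ i, y (f i) := rfl

lemma innerSum_smul (n r p : ℕ) (s : ℝ) (y : Fin n → ℝ) :
    innerSum n r p (fun l => s * y l) = s ^ p * innerSum n r p y := by
  simp only [innerSum_eq, Finset.mul_sum]
  refine Finset.sum_congr rfl fun f _ => ?_
  rw [Finset.prod_mul_distrib, Finset.prod_const, Finset.card_univ, Fintype.card_fin]

lemma Er_smul (n r : ℕ) (s : ℝ) (x y : Fin n → ℝ) :
    Er n r (fun j => s * x j) (fun j => s * y j) = s ^ r * Er n r x y := by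
  simp only [Er, Finset.mul_sum]
  refine Finset.sum_congr rfl fun J hJ => ?_
  rw [Finset.mem_filter] at hJ
  rw [innerSum_smul, Finset.prod_mul_distrib, Finset.prod_const]
  have : s ^ J.card * s ^ (r - J.card) = s ^ r := by
    rw [← pow_add]; congr 1; omega
  ring_nf
  rw [← pow_add, Nat.sub_add_cancel hJ.2]

lemma erase_eq_image_succAbove (q : ℕ) (i : Fin (q+1)) :
    (Finset.univ.erase i) = Finset.univ.image i.succAbove := by
  ext j
  simp [Fin.exists_succAbove_eq_iff]

lemma prod_erase_eq (q : ℕ) (i : Fin (q+1)) (h : Fin (q+1) → ℝ) :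
    ∏ j ∈ Finset.univ.erase i, h j = ∏ j : Fin q, h (i.succAbove j) := by
  rw [erase_eq_image_succAbove, Finset.prod_image]
  intro a _ b _ hab
  exact Fin.succAbove_right_injective hab

lemma monotone_insertNth {q n : ℕ} (f' : Fin q → Fin n) (hmono : Monotone f')
    (i : Fin (q+1)) (v : Fin n)
    (hlo : ∀ t : Fin q, i = t.succ → f' t ≤ v)
    (hhi : ∀ t : Fin q, i = t.castSucc → v ≤ f' t) :
    Monotone (Fin.insertNth i v f') := by
  intro a b hab
  rcases eq_or_lt_of_le hab with rfl | hlt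
  · exact le_rfl
  rcases eq_or_ne i a with rfl | hia <;> rcases eq_or_ne i b with rfl | hib
  · exact absurd hlt (lt_irrefl _)
  · obtain ⟨k, rfl⟩ := Fin.exists_succAbove_eq (Ne.symm hib)
    rw [Fin.insertNth_apply_same, Fin.insertNth_apply_succAbove]
    have hle : i ≤ k.castSucc := by
      by_contra hcon
      push_neg at hcon
      rw [Fin.succAbove_of_castSucc_lt i k hcon] at hlt
      exact absurd hlt (not_lt.2 hcon.le)
    have hne : i ≠ Fin.last q := by
      rintro rfl
      exact absurd hle (not_le.2 (Fin.castSucc_lt_last k))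
    obtain ⟨t, rfl⟩ := (Fin.eq_castSucc_or_eq_last i).resolve_right hne
    exact (hhi t rfl).trans (hmono (Fin.castSucc_le_castSucc_iff.1 hle))
  · obtain ⟨k, rfl⟩ := Fin.exists_succAbove_eq (Ne.symm hia)
    rw [Fin.insertNth_apply_same, Fin.insertNth_apply_succAbove]
    have hck : k.castSucc < i := by
      by_contra hcon
      push_neg at hcon
      rw [Fin.succAbove_of_le_castSucc i k hcon] at hlt
      exact absurd (hcon.trans_lt (Fin.castSucc_lt_succ : k.castSucc < k.succ)) (not_lt.2 hlt.le)
    have h0 : i ≠ 0 := by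
      rintro rfl
      exact (Fin.not_lt_zero _) hck
    obtain ⟨t, rfl⟩ := Fin.eq_succ_of_ne_zero h0
    exact (hmono (Fin.castSucc_lt_succ_iff.1 hck)).trans (hlo t rfl)
  · obtain ⟨k, rfl⟩ := Fin.exists_succAbove_eq (Ne.symm hia)
    obtain ⟨k', rfl⟩ := Fin.exists_succAbove_eq (Ne.symm hib)
    rw [Fin.insertNth_apply_succAbove, Fin.insertNth_apply_succAbove]
    exact hmono (Fin.succAbove_le_succAbove_iff.1 hab)

lemma fiber_card (n r q : ℕ) (hr1 : 1 ≤ r) (hrn : r ≤ n) (f' : Fin q → Fin n)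
    (hmono : Monotone f') (hge : ∀ i, r ≤ (f' i : ℕ) + 1) :
    (((Mon n r (q+1)).sigma fun _ => (Finset.univ : Finset (Fin (q+1)))).filter
        fun a => Fin.removeNth a.2 a.1 = f').card = n + q + 1 - r := by
  have hn : 0 < n := lt_of_lt_of_le hr1 hrn
  set lo : Fin (q+1) → Fin n := Fin.cons ⟨r-1, by omega⟩ f' with hlo
  set hi : Fin (q+1) → Fin n := Fin.snoc f' ⟨n-1, by omega⟩ with hhi
  have hlor : ∀ i : Fin (q+1), r - 1 ≤ ((lo i : ℕ)) := by
    intro i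
    rcases Fin.eq_zero_or_eq_succ i with rfl | ⟨t, rfl⟩
    · rw [hlo]; simp only [Fin.cons_zero]
      exact le_rfl
    · rw [hlo]; simp only [Fin.cons_succ]
      have := hge t; omega
  have card_eq : (((Mon n r (q+1)).sigma fun _ => (Finset.univ : Finset (Fin (q+1)))).filter
        fun a => Fin.removeNth a.2 a.1 = f').card
      = ((Finset.univ : Finset (Fin (q+1))).sigma fun i => Finset.Icc (lo i) (hi i)).card := by
    apply Finset.card_nbij' (fun a => ⟨a.2, a.1 a.2⟩)
      (fun b => ⟨Fin.insertNth b.1 b.2 f', b.1⟩)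
    · rintro ⟨f, i⟩ ha
      simp only [Finset.mem_coe, Finset.mem_filter, Finset.mem_sigma, Mon] at ha
      obtain ⟨⟨⟨-, hfm, hfr⟩, -⟩, hrem⟩ := ha
      have hva : ∀ j : Fin q, f (i.succAbove j) = f' j := fun j => congrFun hrem j
      simp only [Finset.mem_coe, Finset.mem_sigma, Finset.mem_Icc]
      refine ⟨Finset.mem_univ _, ?_, ?_⟩
      · rcases Fin.eq_zero_or_eq_succ i with rfl | ⟨t, rfl⟩
        · rw [hlo]
          simp only [Fin.cons_zero]
          rw [Fin.le_def]
          show r - 1 ≤ (f 0 : ℕ)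
          have := hfr 0
          omega
        · rw [hlo]
          simp only [Fin.cons_succ]
          rw [← hva t, Fin.succAbove_succ_self]
          exact hfm (Fin.castSucc_lt_succ : t.castSucc < t.succ).le
      · rcases Fin.eq_castSucc_or_eq_last i with ⟨t, rfl⟩ | rfl
        · rw [hhi]
          simp only [Fin.snoc_castSucc]
          rw [← hva t, Fin.succAbove_castSucc_self]
          exact hfm (Fin.castSucc_lt_succ : t.castSucc < t.succ).le
        · rw [hhi]
          simp only [Fin.snoc_last]
          rw [Fin.le_def]
          show (f (Fin.last q) : ℕ) ≤ n - 1
          have := (f (Fin.last q)).isLt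
          omega
    · rintro ⟨i, v⟩ hb
      simp only [Finset.mem_coe, Finset.mem_sigma, Finset.mem_Icc] at hb
      obtain ⟨-, hlov, hvhi⟩ := hb
      simp only [Finset.mem_coe, Finset.mem_filter, Finset.mem_sigma, Mon]
      refine ⟨⟨⟨Finset.mem_univ _, ?_, ?_⟩, Finset.mem_univ _⟩, ?_⟩
      · refine monotone_insertNth f' hmono i v ?_ ?_
        · rintro t rfl
          calc f' t = lo t.succ := by rw [hlo]; simp only [Fin.cons_succ]
            _ ≤ v := hlov
        · rintro t rfl
          calc v ≤ hi t.castSucc := hvhi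
            _ = f' t := by rw [hhi]; simp only [Fin.snoc_castSucc]
      · intro j
        rcases eq_or_ne i j with rfl | hne
        · rw [Fin.insertNth_apply_same]
          have h1 := hlor i
          have h2 : (lo i : ℕ) ≤ (v : ℕ) := hlov
          omega
        · obtain ⟨k, rfl⟩ := Fin.exists_succAbove_eq (Ne.symm hne)
          rw [Fin.insertNth_apply_succAbove]
          exact hge k
      · exact Fin.removeNth_insertNth (α := fun _ => Fin n) i v f'
    · rintro ⟨f, i⟩ ha
      rw [Finset.mem_coe, Finset.mem_filter] at ha
      have hins : Fin.insertNth i (f i) f' = f := by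
        rw [← ha.2]
        exact Fin.insertNth_self_removeNth i f
      simp only [hins]
    · rintro ⟨i, v⟩ _
      simp only [Fin.insertNth_apply_same]
  rw [card_eq, Finset.card_sigma]
  have hlh : ∀ i : Fin (q+1), (lo i : ℕ) ≤ (hi i : ℕ) := by
    intro i
    rcases Fin.eq_castSucc_or_eq_last i with ⟨t, rfl⟩ | rfl
    · have h2 : hi t.castSucc = f' t := by rw [hhi]; simp only [Fin.snoc_castSucc]
      rw [h2]
      rcases Fin.eq_zero_or_eq_succ t.castSucc with h0 | ⟨s, hs⟩
      · rw [h0, hlo]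
        simp only [Fin.cons_zero]
        have := hge t; omega
      · rw [hs, hlo]
        simp only [Fin.cons_succ]
        refine hmono ?_
        have hv := congrArg Fin.val hs
        simp only [Fin.coe_castSucc, Fin.val_succ] at hv
        rw [Fin.le_def]
        omega
    · have h2 : (hi (Fin.last q) : ℕ) = n - 1 := by rw [hhi]; simp only [Fin.snoc_last]
      have := (lo (Fin.last q)).isLt
      omega
  have h1 : ∑ i : Fin (q+1), ((hi i : ℕ) : ℤ)
      = (∑ t : Fin q, ((f' t : ℕ) : ℤ)) + ((n : ℤ) - 1) := by
    rw [Fin.sum_univ_castSucc, hhi]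
    simp only [Fin.snoc_castSucc, Fin.snoc_last]
    omega
  have h2 : ∑ i : Fin (q+1), ((lo i : ℕ) : ℤ)
      = ((r : ℤ) - 1) + ∑ t : Fin q, ((f' t : ℕ) : ℤ) := by
    rw [Fin.sum_univ_succ, hlo]
    simp only [Fin.cons_zero, Fin.cons_succ]
    omega
  have hz : (∑ i : Fin (q+1), (((Finset.Icc (lo i) (hi i)).card : ℕ) : ℤ))
      = (n : ℤ) + q + 1 - r := by
    have e1 : ∀ i ∈ (Finset.univ : Finset (Fin (q+1))),
        (((Finset.Icc (lo i) (hi i)).card : ℕ) : ℤ)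
          = ((hi i : ℕ) : ℤ) + 1 - ((lo i : ℕ) : ℤ) := by
      intro i _
      rw [Fin.card_Icc]
      have := hlh i
      omega
    rw [Finset.sum_congr rfl e1, Finset.sum_sub_distrib, Finset.sum_add_distrib, h1, h2,
      Finset.sum_const, Finset.card_univ, Fintype.card_fin, nsmul_eq_mul]
    push_cast
    ring
  have hcast : ((n + q + 1 - r : ℕ) : ℤ) = (n : ℤ) + q + 1 - r := by omega
  have : ((∑ i : Fin (q+1), (Finset.Icc (lo i) (hi i)).card : ℕ) : ℤ)
      = ((n + q + 1 - r : ℕ) : ℤ) := by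
    rw [Nat.cast_sum, hz, hcast]
  exact_mod_cast this

lemma sum_insert_count (n r q : ℕ) (hr1 : 1 ≤ r) (hrn : r ≤ n) (g : Fin n → ℝ) :
    ∑ f ∈ Mon n r (q+1), ∑ i : Fin (q+1), ∏ j : Fin q, g (f (i.succAbove j))
      = ((n + q + 1 - r : ℕ) : ℝ) * ∑ f' ∈ Mon n r q, ∏ j, g (f' j) := by
  have maps : ∀ a ∈ (Mon n r (q+1)).sigma (fun _ => (Finset.univ : Finset (Fin (q+1)))),
      Fin.removeNth a.2 a.1 ∈ Mon n r q := by
    rintro ⟨f, i⟩ ha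
    rw [Finset.mem_sigma, Mon, Finset.mem_filter] at ha
    obtain ⟨⟨-, hfm, hfr⟩, -⟩ := ha
    rw [Mon, Finset.mem_filter]
    exact ⟨Finset.mem_univ _, hfm.comp (Fin.strictMono_succAbove i).monotone,
      fun j => hfr _⟩
  have step1 : ∑ f ∈ Mon n r (q+1), ∑ i : Fin (q+1), ∏ j : Fin q, g (f (i.succAbove j))
      = ∑ a ∈ (Mon n r (q+1)).sigma (fun _ => (Finset.univ : Finset (Fin (q+1)))),
          ∏ j : Fin q, g (Fin.removeNth a.2 a.1 j) :=
    Finset.sum_sigma' _ _ _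
  have step2 := Finset.sum_fiberwise_of_maps_to' maps (fun f' => ∏ j, g (f' j))
  rw [step1, ← step2]
  rw [Finset.mul_sum]
  refine Finset.sum_congr rfl fun f' hf' => ?_
  rw [Finset.sum_const]
  rw [Mon, Finset.mem_filter] at hf'
  obtain ⟨-, hfm, hfr⟩ := hf'
  rw [fiber_card n r q hr1 hrn f' hfm hfr, nsmul_eq_mul]

lemma deriv_sum_zero (n r : ℕ) (hr1 : 1 ≤ r) (hrn : r ≤ n) (d : ℝ) (x y : Fin n → ℝ) :
    ∑ J ∈ Finset.univ.filter (fun J : Finset (Fin n) => J.card ≤ r),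
      (-1:ℝ)^(r - J.card) *
        ((∑ j ∈ J, ∏ k ∈ J.erase j, (d + x k)) *
            (∑ f ∈ Mon n r (r - J.card), ∏ i, (d + y (f i)))
          + (∏ j ∈ J, (d + x j)) *
            (∑ f ∈ Mon n r (r - J.card), ∑ i : Fin (r - J.card),
              ∏ j ∈ Finset.univ.erase i, (d + y (f j)))) = 0 := by
  classical
  set A := Finset.univ.filter (fun J : Finset (Fin n) => J.card ≤ r) with hA
  set A' := Finset.univ.filter (fun J : Finset (Fin n) => J.card ≤ r - 1) with hA'
  set I : ℕ → ℝ := fun p => ∑ f ∈ Mon n r p, ∏ i, (d + y (f i)) with hIdef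
  -- Evaluate the inner double sum (derivative of the h-part)
  have hD2 : ∀ J ∈ A, (∑ f ∈ Mon n r (r - J.card), ∑ i : Fin (r - J.card),
        ∏ j ∈ Finset.univ.erase i, (d + y (f j)))
      = (if J.card < r then ((n - J.card : ℕ) : ℝ) * I (r - J.card - 1) else 0) := by
    intro J hJ
    by_cases hlt : J.card < r
    · rw [if_pos hlt]
      have hcard : J.card ≤ n := le_trans (Finset.card_le_univ J) (by simp)
      obtain ⟨q, hq⟩ : ∃ q, r - J.card = q + 1 := ⟨r - J.card - 1, by omega⟩
      rw [hq]
      rw [Finset.sum_congr rfl (fun f _ => Finset.sum_congr rfl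
        (fun i _ => prod_erase_eq q i (fun j => d + y (f j))))]
      rw [sum_insert_count n r q hr1 hrn (fun l => d + y l)]
      have h1 : n + q + 1 - r = n - J.card := by omega
      rw [h1]
      simp only [Nat.add_sub_cancel, hIdef]
    · rw [if_neg hlt]
      have h0 : r - J.card = 0 := by
        rw [hA, Finset.mem_filter] at hJ
        omega
      rw [h0]
      simp
  -- split the sum
  have split : ∀ J ∈ A, (-1:ℝ)^(r - J.card) *
        ((∑ j ∈ J, ∏ k ∈ J.erase j, (d + x k)) * I (r - J.card)
          + (∏ j ∈ J, (d + x j)) *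
            (∑ f ∈ Mon n r (r - J.card), ∑ i : Fin (r - J.card),
              ∏ j ∈ Finset.univ.erase i, (d + y (f j))))
      = (∑ j ∈ J, (-1:ℝ)^(r - J.card) * (∏ k ∈ J.erase j, (d + x k)) * I (r - J.card))
        + (-1:ℝ)^(r - J.card) * (∏ j ∈ J, (d + x j)) *
            (if J.card < r then ((n - J.card : ℕ) : ℝ) * I (r - J.card - 1) else 0) := by
    intro J hJ
    rw [hD2 J hJ, mul_add]
    congr 1
    · rw [Finset.sum_mul, Finset.mul_sum]
      refine Finset.sum_congr rfl fun j _ => by ring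
    · ring
  rw [Finset.sum_congr rfl split, Finset.sum_add_distrib]
  -- first piece: reindex over (J, j) ↦ (J.erase j, j)
  have hS1 : ∑ J ∈ A, ∑ j ∈ J, (-1:ℝ)^(r - J.card) * (∏ k ∈ J.erase j, (d + x k)) * I (r - J.card)
      = ∑ J' ∈ A', ((n - J'.card : ℕ) : ℝ) *
          ((-1:ℝ)^(r - J'.card - 1) * (∏ k ∈ J', (d + x k)) * I (r - J'.card - 1)) := by
    rw [Finset.sum_sigma' A (fun J => J)
      (fun J j => (-1:ℝ)^(r - J.card) * (∏ k ∈ J.erase j, (d + x k)) * I (r - J.card))]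
    rw [Finset.sum_nbij' (i := fun a : Σ _ : Finset (Fin n), Fin n => (⟨a.1.erase a.2, a.2⟩ : Σ _ : Finset (Fin n), Fin n))
      (j := fun b : Σ _ : Finset (Fin n), Fin n => (⟨insert b.2 b.1, b.2⟩ : Σ _ : Finset (Fin n), Fin n))
      (t := A'.sigma (fun J' => J'ᶜ))
      (g := fun b => (-1:ℝ)^(r - b.1.card - 1) * (∏ k ∈ b.1, (d + x k)) * I (r - b.1.card - 1))
      ?_ ?_ ?_ ?_ ?_]
    · rw [Finset.sum_sigma]
      refine Finset.sum_congr rfl fun J' hJ' => ?_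
      have hr : ∀ s ∈ J'ᶜ, ((-1:ℝ) ^ (r - ((⟨J', s⟩ : Σ _ : Finset (Fin n), Fin n)).fst.card - 1) *
            ∏ k ∈ ((⟨J', s⟩ : Σ _ : Finset (Fin n), Fin n)).fst, (d + x k)) *
            I (r - ((⟨J', s⟩ : Σ _ : Finset (Fin n), Fin n)).fst.card - 1)
          = ((-1:ℝ) ^ (r - J'.card - 1) * ∏ k ∈ J', (d + x k)) * I (r - J'.card - 1) :=
        fun s _ => rfl
      refine Eq.trans (Finset.sum_congr rfl hr) ?_
      rw [Finset.sum_const, nsmul_eq_mul, Finset.card_compl, Fintype.card_fin]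
    · rintro ⟨J, j⟩ ha
      rw [Finset.mem_sigma] at ha
      obtain ⟨hJ, hj⟩ := ha
      rw [hA, Finset.mem_filter] at hJ
      rw [Finset.mem_sigma, hA', Finset.mem_filter, Finset.mem_compl]
      refine ⟨⟨Finset.mem_univ _, ?_⟩, Finset.notMem_erase _ _⟩
      rw [Finset.card_erase_of_mem hj]
      omega
    · rintro ⟨J', j⟩ hb
      rw [Finset.mem_sigma] at hb
      obtain ⟨hJ', hj⟩ := hb
      rw [hA', Finset.mem_filter] at hJ'
      rw [Finset.mem_compl] at hj
      rw [Finset.mem_sigma, hA, Finset.mem_filter]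
      refine ⟨⟨Finset.mem_univ _, ?_⟩, Finset.mem_insert_self _ _⟩
      rw [Finset.card_insert_of_notMem hj]
      omega
    · rintro ⟨J, j⟩ ha
      rw [Finset.mem_sigma] at ha
      simp only [Finset.insert_erase ha.2]
    · rintro ⟨J', j⟩ hb
      rw [Finset.mem_sigma, Finset.mem_compl] at hb
      simp only [Finset.erase_insert hb.2]
    · rintro ⟨J, j⟩ ha
      rw [Finset.mem_sigma] at ha
      obtain ⟨hJ, hj⟩ := ha
      rw [hA, Finset.mem_filter] at hJ
      dsimp only at hj ⊢
      have hc : (J.erase j).card = J.card - 1 := Finset.card_erase_of_mem hj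
      have h1 : 1 ≤ J.card := Finset.card_pos.2 ⟨j, hj⟩
      have h4 : r - (J.card - 1) - 1 = r - J.card := by omega
      rw [hc, h4]
  rw [hS1]
  -- second piece: restrict to A'
  have hS2 : ∑ J ∈ A, (-1:ℝ)^(r - J.card) * (∏ j ∈ J, (d + x j)) *
        (if J.card < r then ((n - J.card : ℕ) : ℝ) * I (r - J.card - 1) else 0)
      = ∑ J ∈ A', (-1:ℝ)^(r - J.card) * (∏ j ∈ J, (d + x j)) *
          (((n - J.card : ℕ) : ℝ) * I (r - J.card - 1)) := by
    have hsub : A' ⊆ A := by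
      intro J hJ
      rw [hA', Finset.mem_filter] at hJ
      rw [hA, Finset.mem_filter]
      exact ⟨Finset.mem_univ _, by omega⟩
    have hz : ∀ J ∈ A, J ∉ A' →
        (-1:ℝ)^(r - J.card) * (∏ j ∈ J, (d + x j)) *
          (if J.card < r then ((n - J.card : ℕ) : ℝ) * I (r - J.card - 1) else 0) = 0 := by
      intro J hJ hJ'
      rw [hA, Finset.mem_filter] at hJ
      rw [hA', Finset.mem_filter] at hJ'
      push_neg at hJ'
      have hge : r - 1 < J.card := hJ' (Finset.mem_univ _)
      rw [if_neg (by omega), mul_zero]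
    rw [← Finset.sum_subset hsub hz]
    refine Finset.sum_congr rfl fun J hJ => ?_
    rw [hA', Finset.mem_filter] at hJ
    rw [if_pos (by omega)]
  rw [hS2, ← Finset.sum_add_distrib]
  refine Finset.sum_eq_zero fun J hJ => ?_
  rw [hA', Finset.mem_filter] at hJ
  obtain ⟨m, hm⟩ : ∃ m, r - J.card = m + 1 := ⟨r - J.card - 1, by omega⟩
  rw [hm]
  simp only [Nat.add_sub_cancel, pow_succ]
  ring

lemma Er_shift (n r : ℕ) (hr1 : 1 ≤ r) (hrn : r ≤ n) (c : ℝ) (x y : Fin n → ℝ) :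
    Er n r (fun j => c + x j) (fun j => c + y j) = Er n r x y := by
  classical
  set φ : ℝ → ℝ := fun e => Er n r (fun j => e + x j) (fun j => e + y j) with hφ
  have hderiv : ∀ d : ℝ, HasDerivAt φ 0 d := by
    intro d
    have expand : φ = fun e => ∑ J ∈ Finset.univ.filter (fun J : Finset (Fin n) => J.card ≤ r),
        (-1:ℝ)^(r - J.card) * ((∏ j ∈ J, (e + x j)) *
          (∑ f ∈ Mon n r (r - J.card), ∏ i, (e + y (f i)))) := by
      funext e
      rw [hφ]
      simp only [Er, innerSum_eq]
      exact Finset.sum_congr rfl fun J _ => by ring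
    rw [expand]
    have H : ∀ J ∈ Finset.univ.filter (fun J : Finset (Fin n) => J.card ≤ r),
        HasDerivAt (fun e => (-1:ℝ)^(r - J.card) * ((∏ j ∈ J, (e + x j)) *
            (∑ f ∈ Mon n r (r - J.card), ∏ i, (e + y (f i)))))
          ((-1:ℝ)^(r - J.card) *
            ((∑ j ∈ J, ∏ k ∈ J.erase j, (d + x k)) *
                (∑ f ∈ Mon n r (r - J.card), ∏ i, (d + y (f i)))
              + (∏ j ∈ J, (d + x j)) *
                (∑ f ∈ Mon n r (r - J.card), ∑ i : Fin (r - J.card),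
                  ∏ j ∈ Finset.univ.erase i, (d + y (f j))))) d := by
      intro J _
      refine HasDerivAt.const_mul _ (HasDerivAt.mul ?_ ?_)
      · have h := HasDerivAt.fun_finset_prod (u := J) (f := fun j e => e + x j)
          (f' := fun _ => (1:ℝ)) (x := d) (fun j _ => (hasDerivAt_id d).add_const (x j))
        simpa [smul_eq_mul] using h
      · refine HasDerivAt.fun_sum fun f _ => ?_
        have h := HasDerivAt.fun_finset_prod (u := (Finset.univ : Finset (Fin (r - J.card))))
          (f := fun i e => e + y (f i)) (f' := fun _ => (1:ℝ)) (x := d)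
          (fun i _ => (hasDerivAt_id d).add_const (y (f i)))
        simpa [smul_eq_mul] using h
    have total := HasDerivAt.fun_sum H
    rwa [deriv_sum_zero n r hr1 hrn d x y] at total
  have hdiff : Differentiable ℝ φ := fun d => (hderiv d).differentiableAt
  have hconst := is_const_of_deriv_eq_zero hdiff (fun d => (hderiv d).deriv) c 0
  rw [hφ] at hconst
  simpa using hconst

lemma continuous_Er2 (n r : ℕ) :
    Continuous (fun p : (Fin n → ℝ) × (Fin n → ℝ) => Er n r p.1 p.2) := by
  unfold Er innerSum
  refine continuous_finset_sum _ fun J _ => ?_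
  refine Continuous.mul (Continuous.mul continuous_const ?_) ?_
  · exact continuous_finset_prod _ fun j _ => (continuous_apply j).comp continuous_fst
  · exact continuous_finset_sum _ fun f _ =>
      continuous_finset_prod _ fun i _ => (continuous_apply (f i)).comp continuous_snd

lemma key_tendsto (t : ℝ) :
    Filter.Tendsto (fun α : ℝ =>
        ((Real.exp (α * (t / 2)) - Real.exp (-(α * (t / 2)))) / α) ^ 2)
      (nhdsWithin 0 {0}ᶜ) (nhds (t ^ 2)) := by
  have h1 : HasDerivAt (fun α : ℝ => α * (t / 2)) (t / 2) 0 := hasDerivAt_mul_const _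
  have h2 : HasDerivAt (fun α : ℝ => Real.exp (α * (t / 2))) (t / 2) 0 := by
    have h := (Real.hasDerivAt_exp (0 * (t / 2))).comp 0 h1
    simpa [Function.comp_def] using h
  have h3 : HasDerivAt (fun α : ℝ => Real.exp (-(α * (t / 2)))) (-(t / 2)) 0 := by
    have h := (Real.hasDerivAt_exp (-(0 * (t / 2)))).comp 0 h1.neg
    simpa [Function.comp_def, Pi.neg_apply] using h
  have h4 : HasDerivAt (fun α : ℝ => Real.exp (α * (t / 2)) - Real.exp (-(α * (t / 2)))) t 0 := by
    have h := h2.sub h3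
    have he : t / 2 - -(t / 2) = t := by ring
    rwa [he] at h
  have h5 := hasDerivAt_iff_tendsto_slope.1 h4
  have h6 : Filter.Tendsto
      (fun α : ℝ => (Real.exp (α * (t / 2)) - Real.exp (-(α * (t / 2)))) / α)
      (nhdsWithin 0 {0}ᶜ) (nhds t) := by
    refine Filter.Tendsto.congr' ?_ h5
    filter_upwards [self_mem_nhdsWithin] with α hα
    simp [slope_def_field, zero_mul, Real.exp_zero, neg_zero, sub_zero]
  exact h6.pow 2

theorem Er_limit' (n r : ℕ) (hr1 : 1 ≤ r) (hrn : r ≤ n) (x y : Fin n → ℝ) :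
    Filter.Tendsto (fun α : ℝ =>
        (α ^ (2 * r))⁻¹ *
          Er n r (fun j => Real.exp (α * x j) + Real.exp (-(α * x j)))
            (fun j => Real.exp (α * y j) + Real.exp (-(α * y j))))
      (nhdsWithin 0 {0}ᶜ)
      (nhds (Er n r (fun j => x j ^ 2) (fun j => y j ^ 2))) := by
  classical
  set u : ℝ → Fin n → ℝ :=
    fun α j => ((Real.exp (α * (x j / 2)) - Real.exp (-(α * (x j / 2)))) / α) ^ 2 with hu
  set v : ℝ → Fin n → ℝ :=
    fun α j => ((Real.exp (α * (y j / 2)) - Real.exp (-(α * (y j / 2)))) / α) ^ 2 with hv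
  have hU : Filter.Tendsto (fun α => (u α, v α)) (nhdsWithin 0 {0}ᶜ)
      (nhds ((fun j => x j ^ 2), (fun j => y j ^ 2))) := by
    refine Filter.Tendsto.prodMk_nhds ?_ ?_
    · exact tendsto_pi_nhds.2 fun j => key_tendsto (x j)
    · exact tendsto_pi_nhds.2 fun j => key_tendsto (y j)
  have hcomp := ((continuous_Er2 n r).tendsto
    ((fun j => x j ^ 2), (fun j => y j ^ 2))).comp hU
  refine Filter.Tendsto.congr' ?_ hcomp
  filter_upwards [self_mem_nhdsWithin] with α hα
  have hα0 : α ≠ 0 := hα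
  have hsq : ∀ t : ℝ, Real.exp (α * t) + Real.exp (-(α * t))
      = 2 + α ^ 2 * (((Real.exp (α * (t / 2)) - Real.exp (-(α * (t / 2)))) / α) ^ 2) := by
    intro t
    have e1 : Real.exp (α * (t/2)) * Real.exp (α * (t/2)) = Real.exp (α * t) := by
      rw [← Real.exp_add]
      ring_nf
    have e2 : Real.exp (-(α * (t/2))) * Real.exp (-(α * (t/2))) = Real.exp (-(α * t)) := by
      rw [← Real.exp_add]
      ring_nf
    have e3 : Real.exp (α * (t/2)) * Real.exp (-(α * (t/2))) = 1 := by
      rw [← Real.exp_add]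
      have : α * (t/2) + -(α * (t/2)) = 0 := by ring
      rw [this, Real.exp_zero]
    have hD : (Real.exp (α * (t/2)) - Real.exp (-(α * (t/2)))) ^ 2
        = Real.exp (α * t) + Real.exp (-(α * t)) - 2 := by
      linear_combination e1 + e2 - 2 * e3
    rw [div_pow, hD]
    field_simp
    ring
  have hx2 : (fun j => Real.exp (α * x j) + Real.exp (-(α * x j)))
      = fun j => 2 + α ^ 2 * u α j := funext fun j => hsq (x j)
  have hy2 : (fun j => Real.exp (α * y j) + Real.exp (-(α * y j)))
      = fun j => 2 + α ^ 2 * v α j := funext fun j => hsq (y j)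
  show Er n r (u α) (v α) = _
  rw [hx2, hy2, Er_shift n r hr1 hrn 2 (fun j => α ^ 2 * u α j) (fun j => α ^ 2 * v α j),
    Er_smul n r (α ^ 2) (u α) (v α), ← pow_mul]
  rw [inv_mul_cancel_left₀ (pow_ne_zero (2 * r) hα0)]

end ErAux

/-- Lemma 5.2 of the paper:
`lim_{α→0} α^{-2r} E_r(e^{αx}+e^{-αx}; e^{αy}+e^{-αy}) = E_r(x²; y²)`. -/
theorem Er_limit (n r : ℕ) (hr1 : 1 ≤ r) (hrn : r ≤ n) (x y : Fin n → ℝ) :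
    Filter.Tendsto (fun α : ℝ =>
        (α ^ (2 * r))⁻¹ *
          Er n r (fun j => Real.exp (α * x j) + Real.exp (-(α * x j)))
            (fun j => Real.exp (α * y j) + Real.exp (-(α * y j))))
      (nhdsWithin 0 {0}ᶜ)
      (nhds (Er n r (fun j => x j ^ 2) (fun j => y j ^ 2))) := by
  exact Er_limit' n r hr1 hrn x y
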